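/- Let $p$ be an odd prime, $s$ an even positive integer, $j > s$ an integer, and $q$ a positive integer with $p \nmid 2q$. Then the congruence $2x^2 \equiv -p^s q \pmod{p^j}$ has at most $2p^{s/2}$ solutions $x \in \{0, 1, \ldots, p^j - 1\}$. -/

import Mathlib

/-- Two distinct solutions of `2z^2 + q ≡ 0 mod p^m` below `p^m` sum to `p^m`. -/
lemma key_sum (p m q : ℕ) (hp : p.Prime) (hm : 0 < m) (hp2 : ¬ p ∣ 2) (hpq : ¬ p ∣ q)
    (z1 z2 : ℕ) (h1 : z1 < z2) (h2 : z2 < p ^ m)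
    (d1 : p ^ m ∣ 2 * z1 ^ 2 + q) (d2 : p ^ m ∣ 2 * z2 ^ 2 + q) :
    z1 + z2 = p ^ m := by
  have hpm : 0 < p ^ m := pow_pos hp.pos m
  have hsq : z1 ^ 2 ≤ z2 ^ 2 := Nat.pow_le_pow_left h1.le 2
  have hle : 2 * z1 ^ 2 + q ≤ 2 * z2 ^ 2 + q := by omega
  have hd : p ^ m ∣ (2 * z2 ^ 2 + q) - (2 * z1 ^ 2 + q) := Nat.dvd_sub d2 d1
  have e : (2 * z2 ^ 2 + q) - (2 * z1 ^ 2 + q) = 2 * ((z2 - z1) * (z2 + z1)) := by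
    zify [hle, h1.le, hsq]; ring
  rw [e] at hd
  have hcop2 : (p ^ m).Coprime 2 := ((hp.coprime_iff_not_dvd).mpr hp2).pow_left m
  have hd' : p ^ m ∣ (z2 - z1) * (z2 + z1) := hcop2.dvd_of_dvd_mul_left hd
  have hz2q : ¬ p ∣ z2 := by
    intro h
    have h1' : p ∣ 2 * z2 ^ 2 := Dvd.dvd.mul_left (dvd_pow h (by norm_num)) 2
    have h2' : p ∣ 2 * z2 ^ 2 + q := dvd_trans (dvd_pow_self p hm.ne') d2
    exact hpq (by have := Nat.dvd_sub h2' h1'; simpa using this)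
  by_cases hc : p ∣ (z2 + z1)
  · have hnd : ¬ p ∣ (z2 - z1) := by
      intro h
      have : p ∣ 2 * z2 := by
        have e2 : (z2 + z1) + (z2 - z1) = 2 * z2 := by omega
        rw [← e2]; exact Nat.dvd_add hc h
      exact hz2q ((Nat.Coprime.dvd_of_dvd_mul_left ((hp.coprime_iff_not_dvd).mpr hp2) this))
    have hcop : (p ^ m).Coprime (z2 - z1) :=
      ((hp.coprime_iff_not_dvd).mpr hnd).pow_left m
    have hfin : p ^ m ∣ z2 + z1 := hcop.dvd_of_dvd_mul_left hd'
    obtain ⟨c, hcc⟩ := hfin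
    have hc1 : c = 1 := by nlinarith
    subst hc1
    simp at hcc
    omega
  · have hcop : (p ^ m).Coprime (z2 + z1) :=
      ((hp.coprime_iff_not_dvd).mpr hc).pow_left m
    have hfin : p ^ m ∣ z2 - z1 := hcop.dvd_of_dvd_mul_right hd'
    have := Nat.le_of_dvd (by omega) hfin
    omega

lemma card_T_le_two (p m q : ℕ) (hp : p.Prime) (hm : 0 < m) (hp2 : ¬ p ∣ 2) (hpq : ¬ p ∣ q) :
    ((Finset.range (p ^ m)).filter (fun z => p ^ m ∣ 2 * z ^ 2 + q)).card ≤ 2 := by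
  set T := (Finset.range (p ^ m)).filter (fun z => p ^ m ∣ 2 * z ^ 2 + q) with hT
  rcases T.eq_empty_or_nonempty with h | ⟨a, ha⟩
  · simp [h]
  · have haR := (Finset.mem_filter.mp ha).1
    have haD := (Finset.mem_filter.mp ha).2
    have haR' : a < p ^ m := Finset.mem_range.mp haR
    have hsub : T ⊆ {a, p ^ m - a} := by
      intro z hz
      have hzR : z < p ^ m := Finset.mem_range.mp (Finset.mem_filter.mp hz).1
      have hzD := (Finset.mem_filter.mp hz).2
      rcases lt_trichotomy z a with h | h | h
      · have := key_sum p m q hp hm hp2 hpq z a h haR' hzD haD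
        simp only [Finset.mem_insert, Finset.mem_singleton]
        omega
      · simp [h]
      · have := key_sum p m q hp hm hp2 hpq a z h hzR haD hzD
        simp only [Finset.mem_insert, Finset.mem_singleton]
        omega
    calc T.card ≤ ({a, p ^ m - a} : Finset ℕ).card := Finset.card_le_card hsub
      _ ≤ 2 := by
          apply le_trans (Finset.card_insert_le _ _)
          simp

theorem stmt_13 (p : ℕ) (hp : p.Prime) (s j q : ℕ) (hs : 0 < s) (hse : Even s)
    (hsj : s < j) (hq : 0 < q) (hpq : ¬ p ∣ 2 * q) :
    ((Finset.range (p ^ j)).filter (fun x => p ^ j ∣ 2 * x ^ 2 + p ^ s * q)).card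
      ≤ 2 * p ^ (s / 2) := by
  have hp2 : ¬ p ∣ 2 := fun h => hpq (h.mul_right q)
  have hpq' : ¬ p ∣ q := fun h => hpq (h.mul_left 2)
  obtain ⟨t, ht⟩ := hse
  have hst : s = 2 * t := by omega
  have hs2 : s / 2 = t := by omega
  set m := j - s with hm
  have hm0 : 0 < m := by omega
  have hpm : 0 < p ^ m := pow_pos hp.pos m
  have hpt : 0 < p ^ t := pow_pos hp.pos t
  rw [hs2]
  set S := (Finset.range (p ^ j)).filter (fun x => p ^ j ∣ 2 * x ^ 2 + p ^ s * q) with hS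
  set S2 := (Finset.range (p ^ (m + t))).filter (fun y => p ^ m ∣ 2 * y ^ 2 + q) with hS2
  set T := (Finset.range (p ^ m)).filter (fun z => p ^ m ∣ 2 * z ^ 2 + q) with hT
  have hdvd : ∀ x ∈ S, p ^ t ∣ x := by
    intro x hx
    have hxD : p ^ j ∣ 2 * x ^ 2 + p ^ s * q := (Finset.mem_filter.mp hx).2
    have h1 : p ^ s ∣ 2 * x ^ 2 := by
      have hps : p ^ s ∣ 2 * x ^ 2 + p ^ s * q :=
        dvd_trans (pow_dvd_pow p hsj.le) hxD
      have := Nat.dvd_sub hps (Dvd.intro q rfl)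
      simpa using this
    have hcop2 : (p ^ s).Coprime 2 := ((hp.coprime_iff_not_dvd).mpr hp2).pow_left s
    have h2 : p ^ s ∣ x ^ 2 := hcop2.dvd_of_dvd_mul_left h1
    have : (p ^ t) ^ 2 ∣ x ^ 2 := by
      rw [← pow_mul]
      rwa [hst, Nat.mul_comm 2 t] at h2
    exact (Nat.pow_dvd_pow_iff (by norm_num)).mp this
  have step1 : S.card ≤ S2.card := by
    apply Finset.card_le_card_of_injOn (fun x => x / p ^ t)
    · intro x hx
      have hxR : x < p ^ j := Finset.mem_range.mp (Finset.mem_filter.mp hx).1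
      have hxD : p ^ j ∣ 2 * x ^ 2 + p ^ s * q := (Finset.mem_filter.mp hx).2
      obtain ⟨y, hy⟩ := hdvd x hx
      have hyd : x / p ^ t = y := by rw [hy]; exact Nat.mul_div_cancel_left y hpt
      simp only [hyd]
      have hylt : y < p ^ (m + t) := by
        by_contra hcon
        push_neg at hcon
        have : p ^ t * p ^ (m + t) ≤ p ^ t * y := Nat.mul_le_mul_left _ hcon
        rw [← pow_add] at this
        have hj' : t + (m + t) = j := by omega
        rw [hj', ← hy] at this
        omega
      have hyD : p ^ m ∣ 2 * y ^ 2 + q := by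
        have e : 2 * x ^ 2 + p ^ s * q = p ^ s * (2 * y ^ 2 + q) := by
          rw [hy, hst]; ring
        have e2 : p ^ j = p ^ s * p ^ m := by rw [← pow_add]; congr 1; omega
        rw [e, e2] at hxD
        exact (Nat.mul_dvd_mul_iff_left (pow_pos hp.pos s)).mp hxD
      exact Finset.mem_filter.mpr ⟨Finset.mem_range.mpr hylt, hyD⟩
    · intro x1 h1 x2 h2 heq
      obtain ⟨y1, hy1⟩ := hdvd x1 h1
      obtain ⟨y2, hy2⟩ := hdvd x2 h2
      simp only [hy1, hy2, Nat.mul_div_cancel_left _ hpt] at heq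
      rw [hy1, hy2, heq]
  have step2 : S2.card ≤ T.card * p ^ t := by
    have := Finset.card_le_card_of_injOn (fun y => (y % p ^ m, y / p ^ m))
      (s := S2) (t := T ×ˢ Finset.range (p ^ t)) ?_ ?_
    · simpa [Finset.card_product] using this
    · intro y hy
      have hyR : y < p ^ (m + t) := Finset.mem_range.mp (Finset.mem_filter.mp hy).1
      have hyD : p ^ m ∣ 2 * y ^ 2 + q := (Finset.mem_filter.mp hy).2
      refine Finset.mem_product.mpr ⟨Finset.mem_filter.mpr ⟨Finset.mem_range.mpr
        (Nat.mod_lt _ hpm), ?_⟩, Finset.mem_range.mpr ?_⟩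
      · have hz : ((2 * (y % p ^ m) ^ 2 + q) : ℕ) ≡ 2 * y ^ 2 + q [MOD p ^ m] :=
          (((Nat.mod_modEq y (p ^ m)).pow 2).mul_left 2).add_right q
        exact (Nat.ModEq.dvd_iff hz (dvd_refl _)).mpr hyD
      · rw [Nat.div_lt_iff_lt_mul hpm]
        calc y < p ^ (m + t) := hyR
          _ = p ^ t * p ^ m := by rw [← pow_add]; ring_nf
    · intro y1 h1 y2 h2 heq
      simp only [Prod.mk.injEq] at heq
      have e1 := Nat.div_add_mod y1 (p ^ m)
      have e2 := Nat.div_add_mod y2 (p ^ m)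
      rw [heq.1, heq.2] at e1
      omega
  calc S.card ≤ T.card * p ^ t := le_trans step1 step2
    _ ≤ 2 * p ^ t := Nat.mul_le_mul_right _ (card_T_le_two p m q hp hm0 hp2 hpq')
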